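/- arXiv:2501.13039 — 8 statements merged into one kernel-verified Lean document; each statement's English description precedes it below -/
import Mathlib

section
/- Let 𝒞 be a C*-algebra, let 𝒜 and ℬ be C*-subalgebras of 𝒞, and let Ω be a nonempty compact Hausdorff space. Then d_KK(𝒜, ℬ) ≤ d_KK(C(Ω, 𝒜), C(Ω, ℬ)), where C(Ω, 𝒜) and C(Ω, ℬ) are viewed as C*-subalgebras of C(Ω, 𝒞). -/
open Metric

/-- The Kadison–Kastler distance between two subsets of a normed space: the Hausdorff-type
distance between their closed unit balls. -/
noncomputable def dKK {X : Type*} [NormedAddCommGroup X] (A B : Set X) : ℝ :=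
  max (⨆ x : ↥(A ∩ closedBall (0 : X) 1), infDist (x : X) (B ∩ closedBall (0 : X) 1))
      (⨆ y : ↥(B ∩ closedBall (0 : X) 1), infDist (y : X) (A ∩ closedBall (0 : X) 1))

/-- `C(Ω, 𝒜)` viewed as a subset of `C(Ω, 𝒞)`: the continuous functions with values in `𝒜`. -/
def contValIn {Ω C : Type*} [TopologicalSpace Ω] [TopologicalSpace C]
    (A : Set C) : Set C(Ω, C) :=
  {f | ∀ t, f t ∈ A}

lemma dKK_aux {X : Type*} [NormedAddCommGroup X] {Ω : Type*} [TopologicalSpace Ω]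
    [CompactSpace Ω] [Nonempty Ω] (A B : Set X) (h0A : (0 : X) ∈ A) (h0B : (0 : X) ∈ B) :
    (⨆ x : ↥(A ∩ closedBall (0 : X) 1), infDist (x : X) (B ∩ closedBall (0 : X) 1)) ≤
    (⨆ f : ↥(contValIn (Ω := Ω) A ∩ closedBall (0 : C(Ω, X)) 1),
      infDist (f : C(Ω, X)) (contValIn (Ω := Ω) B ∩ closedBall (0 : C(Ω, X)) 1)) := by
  have h0A' : (0 : X) ∈ A ∩ closedBall (0 : X) 1 :=
    ⟨h0A, by simp⟩
  have h0B' : (0 : C(Ω, X)) ∈ contValIn (Ω := Ω) B ∩ closedBall (0 : C(Ω, X)) 1 :=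
    ⟨fun t => h0B, by simp⟩
  have h0A'' : (0 : C(Ω, X)) ∈ contValIn (Ω := Ω) A ∩ closedBall (0 : C(Ω, X)) 1 :=
    ⟨fun t => h0A, by simp⟩
  have hne : Nonempty ↥(A ∩ closedBall (0 : X) 1) := ⟨⟨0, h0A'⟩⟩
  apply ciSup_le
  intro x
  obtain ⟨hxA, hx1⟩ := x.2
  have hx1' : ‖(x : X)‖ ≤ 1 := by simpa [dist_zero_right] using hx1
  -- the constant function at x
  set cx : C(Ω, X) := ContinuousMap.const Ω (x : X) with hcx
  have hcxmem : cx ∈ contValIn (Ω := Ω) A ∩ closedBall (0 : C(Ω, X)) 1 := by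
    refine ⟨fun t => hxA, ?_⟩
    rw [mem_closedBall, dist_zero_right]
    exact ContinuousMap.norm_le _ zero_le_one |>.mpr fun t => hx1'
  have step1 : infDist (x : X) (B ∩ closedBall (0 : X) 1) ≤
      infDist cx (contValIn (Ω := Ω) B ∩ closedBall (0 : C(Ω, X)) 1) := by
    have : Nonempty ↥(contValIn (Ω := Ω) B ∩ closedBall (0 : C(Ω, X)) 1) := ⟨⟨0, h0B'⟩⟩
    conv_rhs => rw [infDist_eq_iInf]
    apply le_ciInf
    rintro ⟨g, hg⟩
    obtain ⟨hgB, hg1⟩ := hg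
    have hg1' : ‖g‖ ≤ 1 := by simpa [dist_zero_right] using hg1
    set t₀ : Ω := Classical.arbitrary Ω
    have hgt : g t₀ ∈ B ∩ closedBall (0 : X) 1 :=
      ⟨hgB t₀, by simpa [dist_zero_right] using (g.norm_coe_le_norm t₀).trans hg1'⟩
    calc infDist (x : X) (B ∩ closedBall (0 : X) 1) ≤ dist (x : X) (g t₀) :=
            infDist_le_dist_of_mem hgt
      _ = dist (cx t₀) (g t₀) := rfl
      _ ≤ dist cx g := ContinuousMap.dist_apply_le_dist t₀
  have step2 : infDist cx (contValIn (Ω := Ω) B ∩ closedBall (0 : C(Ω, X)) 1) ≤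
      ⨆ f : ↥(contValIn (Ω := Ω) A ∩ closedBall (0 : C(Ω, X)) 1),
        infDist (f : C(Ω, X)) (contValIn (Ω := Ω) B ∩ closedBall (0 : C(Ω, X)) 1) := by
    refine le_ciSup_of_le ?_ (⟨cx, hcxmem⟩ :
      ↥(contValIn (Ω := Ω) A ∩ closedBall (0 : C(Ω, X)) 1)) le_rfl
    refine ⟨1, ?_⟩
    rintro r ⟨f, rfl⟩
    calc infDist (f : C(Ω, X)) (contValIn (Ω := Ω) B ∩ closedBall (0 : C(Ω, X)) 1)
        ≤ dist (f : C(Ω, X)) 0 := infDist_le_dist_of_mem h0B'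
      _ ≤ 1 := by simpa [dist_zero_right] using f.2.2
  exact step1.trans step2

/-- For C*-subalgebras `𝒜, ℬ` of a C*-algebra `𝒞` and a nonempty compact Hausdorff space `Ω`,
`d_KK(𝒜, ℬ) ≤ d_KK(C(Ω, 𝒜), C(Ω, ℬ))`. -/
theorem dKK_le_dKK_contMap
    {C : Type*} [NonUnitalNormedRing C] [StarRing C] [CStarRing C] [NormedSpace ℂ C]
    [IsScalarTower ℂ C C] [SMulCommClass ℂ C C] [StarModule ℂ C] [CompleteSpace C]
    (Ω : Type*) [TopologicalSpace Ω] [CompactSpace Ω] [T2Space Ω] [Nonempty Ω]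
    (A B : NonUnitalStarSubalgebra ℂ C)
    (hA : IsClosed (A : Set C)) (hB : IsClosed (B : Set C)) :
    dKK (A : Set C) (B : Set C) ≤
      dKK (contValIn (Ω := Ω) (A : Set C)) (contValIn (Ω := Ω) (B : Set C)) := by
  exact max_le_max (dKK_aux _ _ A.zero_mem B.zero_mem) (dKK_aux _ _ B.zero_mem A.zero_mem)
end

section
/- Let 𝒞 be a C*-algebra, let 𝒜 and ℬ be finite-dimensional *-subalgebras of 𝒞, and let Ω be a nonempty locally compact Hausdorff space. Then d_KK(𝒜, ℬ) ≤ d_KK(C₀(Ω, 𝒜), C₀(Ω, ℬ)), where C₀(Ω, 𝒜) and C₀(Ω, ℬ) are viewed as C*-subalgebras of C₀(Ω, 𝒞). -/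
open Metric
open scoped ZeroAtInfty

/-- `C₀(Ω, 𝒜)` viewed as a subset of `C₀(Ω, 𝒞)`: the continuous functions vanishing at infinity
with values in `𝒜`. -/
def c0ValIn {Ω C : Type*} [TopologicalSpace Ω] [NormedAddCommGroup C]
    (A : Set C) : Set C₀(Ω, C) :=
  {f | ∀ t, f t ∈ A}

lemma c0_sup_aux {C : Type*} [NormedAddCommGroup C] [NormedSpace ℝ C]
    (Ω : Type*) [TopologicalSpace Ω] [LocallyCompactSpace Ω] [T2Space Ω] [Nonempty Ω]
    (A B : Set C) (hA0 : (0 : C) ∈ A) (hB0 : (0 : C) ∈ B)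
    (hA : ∀ (r : ℝ) (a : C), a ∈ A → r • a ∈ A) :
    (⨆ x : ↥(A ∩ closedBall (0 : C) 1), infDist (x : C) (B ∩ closedBall (0 : C) 1)) ≤
    ⨆ x : ↥(c0ValIn (Ω := Ω) A ∩ closedBall (0 : C₀(Ω, C)) 1),
      infDist (x : C₀(Ω, C)) (c0ValIn (Ω := Ω) B ∩ closedBall (0 : C₀(Ω, C)) 1) := by
  have hAne : (A ∩ closedBall (0 : C) 1).Nonempty := ⟨0, hA0, mem_closedBall_self zero_le_one⟩
  have : Nonempty ↥(A ∩ closedBall (0 : C) 1) := hAne.to_subtype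
  apply ciSup_le
  rintro ⟨a, haA, haB⟩
  have hanorm : ‖a‖ ≤ 1 := by simpa [mem_closedBall_iff_norm] using haB
  -- pick a bump function equal to 1 at a point
  obtain ⟨t₀⟩ := ‹Nonempty Ω›
  obtain ⟨φ, hφ1, -, hφc, hφ01⟩ :=
    exists_continuous_one_zero_of_isCompact (isCompact_singleton (x := t₀))
      isClosed_empty (by simp)
  -- the function t ↦ φ t • a
  have hcont : Continuous fun t : Ω => φ t • a := φ.continuous.smul continuous_const
  have hsupp : HasCompactSupport fun t : Ω => φ t • a := by
    apply HasCompactSupport.intro hφc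
    intro t ht
    simp [image_eq_zero_of_notMem_tsupport ht]
  let f : C₀(Ω, C) := ⟨⟨fun t => φ t • a, hcont⟩, hsupp.is_zero_at_infty⟩
  have hf_apply : ∀ t, f t = φ t • a := fun _ => rfl
  have hf_t₀ : f t₀ = a := by
    simp [hf_apply, hφ1 (Set.mem_singleton t₀)]
  have hf_norm : ‖f‖ ≤ 1 := by
    rw [← ZeroAtInftyContinuousMap.norm_toBCF_eq_norm]
    apply BoundedContinuousFunction.norm_le_of_nonempty.2
    intro t
    show ‖f t‖ ≤ 1
    have : ‖f t‖ = |φ t| * ‖a‖ := by rw [hf_apply, norm_smul, Real.norm_eq_abs]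
    rw [this, abs_of_nonneg (hφ01 t).1]
    calc φ t * ‖a‖ ≤ 1 * 1 :=
          mul_le_mul (hφ01 t).2 hanorm (norm_nonneg a) zero_le_one
      _ = 1 := one_mul 1
  have hfA : f ∈ c0ValIn (Ω := Ω) A ∩ closedBall (0 : C₀(Ω, C)) 1 := by
    constructor
    · intro t; exact hA (φ t) a haA
    · simpa [mem_closedBall_iff_norm] using hf_norm
  have hBne : (c0ValIn (Ω := Ω) B ∩ closedBall (0 : C₀(Ω, C)) 1).Nonempty :=
    ⟨0, fun t => by simpa using hB0, mem_closedBall_self zero_le_one⟩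
  have key : infDist a (B ∩ closedBall (0 : C) 1) ≤
      infDist f (c0ValIn (Ω := Ω) B ∩ closedBall (0 : C₀(Ω, C)) 1) := by
    have : Nonempty ↥(c0ValIn (Ω := Ω) B ∩ closedBall (0 : C₀(Ω, C)) 1) := hBne.to_subtype
    nth_rewrite 2 [infDist_eq_iInf]
    apply le_ciInf
    rintro ⟨g, hgB, hgball⟩
    have h1 : infDist a (B ∩ closedBall (0 : C) 1) ≤ dist a (g t₀) := by
      apply infDist_le_dist_of_mem
      refine ⟨hgB t₀, ?_⟩
      rw [mem_closedBall_iff_norm, sub_zero]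
      have := BoundedContinuousFunction.norm_coe_le_norm g.toBCF t₀
      rw [ZeroAtInftyContinuousMap.norm_toBCF_eq_norm] at this
      exact this.trans (by simpa [mem_closedBall_iff_norm] using hgball)
    refine h1.trans ?_
    have : dist a (g t₀) = ‖(f - g) t₀‖ := by
      simp [hf_t₀, dist_eq_norm]
    rw [this, dist_eq_norm]
    have := BoundedContinuousFunction.norm_coe_le_norm (f - g).toBCF t₀
    rwa [ZeroAtInftyContinuousMap.norm_toBCF_eq_norm] at this
  refine key.trans (le_ciSup_of_le ?_ ⟨f, hfA⟩ le_rfl)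
  refine ⟨1, Set.forall_mem_range.2 ?_⟩
  rintro ⟨x, hx1, hx2⟩
  have h0 : (0 : C₀(Ω, C)) ∈ c0ValIn (Ω := Ω) B ∩ closedBall (0 : C₀(Ω, C)) 1 :=
    ⟨fun t => by simpa using hB0, mem_closedBall_self zero_le_one⟩
  exact (infDist_le_dist_of_mem h0).trans (by simpa [mem_closedBall_iff_norm] using hx2)

/-- For finite-dimensional `*`-subalgebras `𝒜, ℬ` of a C*-algebra `𝒞` and a nonempty locally
compact Hausdorff space `Ω`, `d_KK(𝒜, ℬ) ≤ d_KK(C₀(Ω, 𝒜), C₀(Ω, ℬ))`. -/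
theorem dKK_le_dKK_c0_of_finiteDimensional
    {C : Type*} [NonUnitalNormedRing C] [StarRing C] [CStarRing C] [NormedSpace ℂ C]
    [IsScalarTower ℂ C C] [SMulCommClass ℂ C C] [StarModule ℂ C] [CompleteSpace C]
    (Ω : Type*) [TopologicalSpace Ω] [LocallyCompactSpace Ω] [T2Space Ω] [Nonempty Ω]
    (A B : NonUnitalStarSubalgebra ℂ C)
    [FiniteDimensional ℂ A] [FiniteDimensional ℂ B] :
    dKK (A : Set C) (B : Set C) ≤
      dKK (c0ValIn (Ω := Ω) (A : Set C)) (c0ValIn (Ω := Ω) (B : Set C)) := by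
  have hsmul : ∀ (S : NonUnitalStarSubalgebra ℂ C) (r : ℝ) (a : C),
      a ∈ (S : Set C) → r • a ∈ (S : Set C) := fun S r a ha => by
    have : (r : ℂ) • a ∈ S := SMulMemClass.smul_mem (r : ℂ) ha
    simpa using this
  unfold dKK
  exact max_le_max
    (c0_sup_aux Ω (A : Set C) (B : Set C) A.zero_mem B.zero_mem (hsmul A))
    (c0_sup_aux Ω (B : Set C) (A : Set C) B.zero_mem A.zero_mem (hsmul B))
end

section
/- Let 𝒞 be a C*-algebra, let 𝒜 and ℬ be finite-dimensional *-subalgebras of 𝒞, and let Ω be a nonempty locally compact Hausdorff space. Then d₀(𝒜, ℬ) ≤ d₀(C₀(Ω, 𝒜), C₀(Ω, ℬ)), where C₀(Ω, 𝒜) and C₀(Ω, ℬ) are viewed as C*-subalgebras of C₀(Ω, 𝒞). -/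
open Metric
open scoped ZeroAtInfty

/-- `A ⊆_γ B`: every element of the closed unit ball of `A` is within distance `γ` of `B`. -/
def nearIncl {X : Type*} [NormedAddCommGroup X] (A B : Set X) (γ : ℝ) : Prop :=
  ∀ x ∈ A ∩ closedBall (0 : X) 1, ∃ y ∈ B, ‖x - y‖ ≤ γ

/-- The Christensen distance `d₀`. -/
noncomputable def d0 {X : Type*} [NormedAddCommGroup X] (A B : Set X) : ℝ :=
  sInf {γ : ℝ | 0 < γ ∧ nearIncl A B γ ∧ nearIncl B A γ}

section aux

variable {C : Type*} [NonUnitalNormedRing C] [StarRing C] [CStarRing C] [NormedSpace ℂ C]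
    [IsScalarTower ℂ C C] [SMulCommClass ℂ C C] [StarModule ℂ C] [CompleteSpace C]
    {Ω : Type*} [TopologicalSpace Ω] [LocallyCompactSpace Ω] [T2Space Ω] [Nonempty Ω]

/-- Transfer a near-inclusion for the `C₀` algebras to one for the fibers. -/
lemma nearIncl_of_c0 (A B : NonUnitalStarSubalgebra ℂ C) {γ : ℝ}
    (h : nearIncl (c0ValIn (Ω := Ω) (A : Set C)) (c0ValIn (Ω := Ω) (B : Set C)) γ) :
    nearIncl (A : Set C) (B : Set C) γ := by
  rintro x ⟨hxA, hx1⟩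
  obtain ⟨t₀⟩ := ‹Nonempty Ω›
  -- a bump function equal to 1 at t₀
  obtain ⟨φ, hφ1, -, hφc, hφ01⟩ :=
    exists_continuous_one_zero_of_isCompact (isCompact_singleton (x := t₀))
      isClosed_empty (Set.disjoint_empty _)
  -- the function t ↦ φ t • x as an element of C₀(Ω, C)
  have hcont : Continuous fun t : Ω => ((φ t : ℂ)) • x := by fun_prop
  have hzero : Filter.Tendsto (fun t : Ω => ((φ t : ℂ)) • x)
      (Filter.cocompact Ω) (nhds 0) := by
    have h0 : Filter.Tendsto φ (Filter.cocompact Ω) (nhds (0 : ℝ)) := hφc.is_zero_at_infty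
    have := ((Complex.continuous_ofReal.tendsto 0).comp h0).smul_const x
    simpa using this
  set f : C₀(Ω, C) := ⟨⟨fun t => ((φ t : ℂ)) • x, hcont⟩, hzero⟩ with hf
  have hfA : f ∈ c0ValIn (Ω := Ω) (A : Set C) := fun t => A.smul_mem _ hxA
  have hfball : f ∈ closedBall (0 : C₀(Ω, C)) 1 := by
    rw [mem_closedBall_zero_iff, ← ZeroAtInftyContinuousMap.norm_toBCF_eq_norm]
    refine BoundedContinuousFunction.norm_le zero_le_one |>.2 fun t => ?_
    have : ‖((φ t : ℂ)) • x‖ = |φ t| * ‖x‖ := by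
      rw [norm_smul, Complex.norm_real, Real.norm_eq_abs]
    show ‖((φ t : ℂ)) • x‖ ≤ 1
    rw [this, abs_of_nonneg (hφ01 t).1]
    calc φ t * ‖x‖ ≤ 1 * 1 := by
          apply mul_le_mul (hφ01 t).2 (mem_closedBall_zero_iff.mp hx1) (norm_nonneg x)
            zero_le_one
      _ = 1 := one_mul 1
  obtain ⟨g, hgB, hfg⟩ := h f ⟨hfA, hfball⟩
  refine ⟨g t₀, hgB t₀, ?_⟩
  have h1 : f t₀ = x := by
    show ((φ t₀ : ℂ)) • x = x
    rw [hφ1 rfl]; simp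
  calc ‖x - g t₀‖ = ‖(f - g) t₀‖ := by rw [← h1]; rfl
    _ ≤ ‖(f - g).toBCF‖ :=
        BoundedContinuousFunction.norm_coe_le_norm (f - g).toBCF t₀
    _ = ‖f - g‖ := ZeroAtInftyContinuousMap.norm_toBCF_eq_norm
    _ ≤ γ := hfg

lemma nearIncl_one (A B : NonUnitalStarSubalgebra ℂ C) :
    nearIncl (c0ValIn (Ω := Ω) (A : Set C)) (c0ValIn (Ω := Ω) (B : Set C)) 1 := by
  rintro f ⟨-, hf1⟩
  exact ⟨0, fun t => show (0 : C) ∈ B from B.zero_mem, by simpa using mem_closedBall_zero_iff.mp hf1⟩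

end aux

/-- For finite-dimensional `*`-subalgebras `𝒜, ℬ` of a C*-algebra `𝒞` and a nonempty locally
compact Hausdorff space `Ω`, `d₀(𝒜, ℬ) ≤ d₀(C₀(Ω, 𝒜), C₀(Ω, ℬ))`. -/
theorem d0_le_d0_c0_of_finiteDimensional
    {C : Type*} [NonUnitalNormedRing C] [StarRing C] [CStarRing C] [NormedSpace ℂ C]
    [IsScalarTower ℂ C C] [SMulCommClass ℂ C C] [StarModule ℂ C] [CompleteSpace C]
    (Ω : Type*) [TopologicalSpace Ω] [LocallyCompactSpace Ω] [T2Space Ω] [Nonempty Ω]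
    (A B : NonUnitalStarSubalgebra ℂ C)
    [FiniteDimensional ℂ A] [FiniteDimensional ℂ B] :
    d0 (A : Set C) (B : Set C) ≤
      d0 (c0ValIn (Ω := Ω) (A : Set C)) (c0ValIn (Ω := Ω) (B : Set C)) := by
  apply csInf_le_csInf
  · exact ⟨0, fun γ hγ => le_of_lt hγ.1⟩
  · exact ⟨1, one_pos, nearIncl_one A B, nearIncl_one B A⟩
  · rintro γ ⟨hγ0, h1, h2⟩
    exact ⟨hγ0, nearIncl_of_c0 A B h1, nearIncl_of_c0 B A h2⟩
end

section
/- Let 𝒞 be a C*-algebra, let 𝒜 and ℬ be C*-subalgebras of 𝒞, and let Ω be a locally compact Hausdorff space. Then d_KK(C₀(Ω, 𝒜), C₀(Ω, ℬ)) ≤ d_KK(𝒜, ℬ), where C₀(Ω, 𝒜) and C₀(Ω, ℬ) are viewed as C*-subalgebras of C₀(Ω, 𝒞). (Equivalently: for a commutative C*-algebra 𝒟, d_KK(𝒜 ⊗min 𝒟, ℬ ⊗min 𝒟) ≤ d_KK(𝒜, ℬ).) -/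
open Metric
open scoped ZeroAtInfty

open Filter Set

/-- Key approximation lemma: if every value of `f` is within `d` of the unit ball of `B`,
then `f` is within `d` of the unit ball of `C₀(Ω, B)`. -/
lemma key_lemma {C : Type*} [NonUnitalNormedRing C] [StarRing C] [NormedSpace ℂ C]
    {Ω : Type*} [TopologicalSpace Ω] [LocallyCompactSpace Ω] [T2Space Ω]
    (B : NonUnitalStarSubalgebra ℂ C) {d : ℝ} (hd0 : 0 ≤ d)
    (f : C₀(Ω, C))
    (hd : ∀ t : Ω, infDist (f t) ((B : Set C) ∩ closedBall 0 1) ≤ d) :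
    infDist f (c0ValIn (B : Set C) ∩ closedBall 0 1) ≤ d := by
  refine le_of_forall_pos_le_add fun ε hε => ?_
  set ε' := ε / 3 with hε'def
  have hε' : 0 < ε' := by positivity
  have hBne : ((B : Set C) ∩ closedBall 0 1).Nonempty :=
    ⟨0, B.zero_mem, mem_closedBall_self zero_le_one⟩
  -- compact set outside which f is small
  have h0 : {t : Ω | ‖f t‖ < ε'} ∈ cocompact Ω := by
    have := Metric.tendsto_nhds.mp (zero_at_infty f) ε' hε'
    exact (by simpa [dist_zero_right] using this : ∀ᶠ x in cocompact Ω, ‖f x‖ < ε')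
  obtain ⟨K₀, hK₀c, hK₀⟩ := mem_cocompact.mp h0
  -- open cover
  set U : Ω → Set Ω := fun p => {s | ‖f s - f p‖ < ε'} with hUdef
  have hUopen : ∀ p, IsOpen (U p) :=
    fun p => isOpen_lt ((f.continuous.sub continuous_const).norm) continuous_const
  have hcover : K₀ ⊆ ⋃ p, U p := fun p _ => mem_iUnion.mpr ⟨p, by simp [hUdef, hε']⟩
  obtain ⟨T, hT⟩ := hK₀c.elim_finite_subcover U hUopen hcover
  rw [← Set.iUnion_subtype (fun p => p ∈ T) (fun i => U ↑i)] at hT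
  obtain ⟨φ, hsub, hcs⟩ :=
    PartitionOfUnity.exists_isSubordinate_of_locallyFinite_t2space hK₀c
      (fun i : ↥T => U ↑i) (fun i => hUopen ↑i) (locallyFinite_of_finite _) hT
  -- choose approximants
  have hbex : ∀ i : ↥T, ∃ b ∈ (B : Set C) ∩ closedBall 0 1, dist (f ↑i) b < d + ε' :=
    fun i => (infDist_lt_iff hBne).mp (lt_of_le_of_lt (hd ↑i) (by linarith))
  choose b hbmem hbd using hbex
  -- the approximating function
  set g₀ : Ω → C := fun t => ∑ i : ↥T, ((φ i t : ℝ) : ℂ) • b i with hg₀def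
  have cont : Continuous g₀ :=
    continuous_finset_sum _ fun i _ =>
      (Complex.continuous_ofReal.comp (φ i).continuous).smul continuous_const
  have hterm : ∀ i : ↥T, HasCompactSupport fun t => ((φ i t : ℝ) : ℂ) • b i :=
    fun i => (hcs i).comp_left (g := fun r : ℝ => (r : ℂ) • b i) (by simp)
  have hgcs : HasCompactSupport g₀ := by
    have : g₀ = ∑ i : ↥T, fun t => ((φ i t : ℝ) : ℂ) • b i := by
      ext t; simp [hg₀def]
    rw [this]
    exact Finset.univ.sum_induction _ _ (fun _ _ => HasCompactSupport.add)
      (by simpa using HasCompactSupport.zero (α := Ω) (β := C)) fun i _ => hterm i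
  set g : C₀(Ω, C) := ⟨⟨g₀, cont⟩, hgcs.is_zero_at_infty⟩ with hgdef
  -- g has values in B
  have hgB : ∀ t, g t ∈ (B : Set C) := fun t =>
    sum_mem fun i _ => SMulMemClass.smul_mem _ (hbmem i).1
  -- sums of φ
  have hsle : ∀ t, ∑ i : ↥T, φ i t ≤ 1 := fun t => by
    have := φ.sum_le_one' t
    rwa [finsum_eq_sum_of_fintype] at this
  have hsnn : ∀ t, 0 ≤ ∑ i : ↥T, φ i t :=
    fun t => Finset.sum_nonneg fun i _ => φ.nonneg i t
  -- norm of g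
  have hgnorm : ∀ t, ‖g t‖ ≤ 1 := fun t => by
    calc ‖g t‖ ≤ ∑ i : ↥T, ‖((φ i t : ℝ) : ℂ) • b i‖ := norm_sum_le _ _
      _ ≤ ∑ i : ↥T, φ i t := by
          refine Finset.sum_le_sum fun i _ => ?_
          rw [norm_smul, Complex.norm_real, Real.norm_of_nonneg (φ.nonneg i t)]
          have hb1 : ‖b i‖ ≤ 1 := by
            simpa [dist_zero_right] using mem_closedBall.mp (hbmem i).2
          nlinarith [φ.nonneg i t, norm_nonneg (b i)]
      _ ≤ 1 := hsle t
  have hgnorm' : ‖g‖ ≤ 1 := by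
    rw [← ZeroAtInftyContinuousMap.norm_toBCF_eq_norm]
    exact (BoundedContinuousFunction.norm_le zero_le_one).mpr hgnorm
  have hgmem : g ∈ c0ValIn (B : Set C) ∩ closedBall 0 1 :=
    ⟨hgB, by simpa [mem_closedBall, dist_zero_right] using hgnorm'⟩
  -- pointwise estimate
  have hpt : ∀ t, ‖f t - g t‖ ≤ d + ε := by
    intro t
    set s : ℝ := ∑ i : ↥T, φ i t with hsdef
    have hs0 : 0 ≤ s := hsnn t
    have hs1 : s ≤ 1 := hsle t
    have hid : f t - g t
        = ((1 - s : ℝ) : ℂ) • f t + ∑ i : ↥T, ((φ i t : ℝ) : ℂ) • (f t - b i) := by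
      have h1 : ∑ i : ↥T, ((φ i t : ℝ) : ℂ) • (f t - b i)
          = ((s : ℝ) : ℂ) • f t - g t := by
        simp only [smul_sub, Finset.sum_sub_distrib, ← Finset.sum_smul, hsdef]
        push_cast
        rfl
      rw [h1, ← add_sub_assoc, ← add_smul]
      push_cast
      simp
    -- each summand bound
    have hsummand : ∀ i : ↥T, ‖((φ i t : ℝ) : ℂ) • (f t - b i)‖ ≤ φ i t * (d + 2 * ε') := by
      intro i
      rw [norm_smul, Complex.norm_real, Real.norm_of_nonneg (φ.nonneg i t)]
      rcases eq_or_ne (φ i t) 0 with h | h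
      · simp [h]
      · have htU : t ∈ U ↑i := hsub i (subset_tsupport _ h)
        have h1 : ‖f t - f ↑i‖ < ε' := htU
        have h2 : ‖f ↑i - b i‖ < d + ε' := by
          simpa [dist_eq_norm] using hbd i
        have h3 : ‖f t - b i‖ ≤ d + 2 * ε' := by
          calc ‖f t - b i‖ ≤ ‖f t - f ↑i‖ + ‖f ↑i - b i‖ :=
            norm_sub_le_norm_sub_add_norm_sub _ _ _
            _ ≤ d + 2 * ε' := by linarith
        exact mul_le_mul_of_nonneg_left h3 (φ.nonneg i t)
    -- first term bound
    have hfirst : (1 - s) * ‖f t‖ ≤ ε' := by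
      by_cases ht : t ∈ K₀
      · have : s = 1 := by
          have := φ.sum_eq_one' t ht
          rwa [finsum_eq_sum_of_fintype] at this
        simp [this, hε'.le]
      · have hft : ‖f t‖ < ε' := hK₀ ht
        nlinarith [norm_nonneg (f t)]
    calc ‖f t - g t‖
        ≤ ‖((1 - s : ℝ) : ℂ) • f t‖ + ‖∑ i : ↥T, ((φ i t : ℝ) : ℂ) • (f t - b i)‖ := by
          rw [hid]; exact norm_add_le _ _
      _ ≤ (1 - s) * ‖f t‖ + ∑ i : ↥T, φ i t * (d + 2 * ε') := by
          gcongr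
          · rw [norm_smul, Complex.norm_real, Real.norm_of_nonneg (by linarith)]
          · exact (norm_sum_le _ _).trans (Finset.sum_le_sum fun i _ => hsummand i)
      _ ≤ ε' + s * (d + 2 * ε') := by
          rw [← Finset.sum_mul]
          exact add_le_add hfirst le_rfl
      _ ≤ d + ε := by nlinarith
  have hdist : dist f g ≤ d + ε := by
    rw [dist_eq_norm, ← ZeroAtInftyContinuousMap.norm_toBCF_eq_norm]
    exact (BoundedContinuousFunction.norm_le (by linarith)).mpr fun t => hpt t
  exact (infDist_le_dist_of_mem hgmem).trans hdist

/-- For C*-subalgebras `𝒜, ℬ` of a C*-algebra `𝒞` and a locally compact Hausdorff space `Ω`,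
`d_KK(C₀(Ω, 𝒜), C₀(Ω, ℬ)) ≤ d_KK(𝒜, ℬ)`. -/
theorem dKK_c0_le_dKK
    {C : Type*} [NonUnitalNormedRing C] [StarRing C] [CStarRing C] [NormedSpace ℂ C]
    [IsScalarTower ℂ C C] [SMulCommClass ℂ C C] [StarModule ℂ C] [CompleteSpace C]
    (Ω : Type*) [TopologicalSpace Ω] [LocallyCompactSpace Ω] [T2Space Ω]
    (A B : NonUnitalStarSubalgebra ℂ C)
    (hA : IsClosed (A : Set C)) (hB : IsClosed (B : Set C)) :
    dKK (c0ValIn (Ω := Ω) (A : Set C)) (c0ValIn (Ω := Ω) (B : Set C)) ≤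
      dKK (A : Set C) (B : Set C) := by
  set d := dKK (A : Set C) (B : Set C) with hddef
  have hd0 : 0 ≤ d :=
    le_max_of_le_left (Real.iSup_nonneg fun _ => infDist_nonneg)
  have hbdd : ∀ (S R : NonUnitalStarSubalgebra ℂ C), BddAbove (Set.range
      fun x : ↥((S : Set C) ∩ closedBall (0 : C) 1) =>
        infDist (x : C) ((R : Set C) ∩ closedBall (0 : C) 1)) := by
    intro S R
    refine ⟨1, ?_⟩
    rintro r ⟨x, rfl⟩
    calc infDist (x : C) ((R : Set C) ∩ closedBall (0 : C) 1)
        ≤ dist (x : C) 0 :=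
          infDist_le_dist_of_mem ⟨R.zero_mem, mem_closedBall_self zero_le_one⟩
      _ ≤ 1 := mem_closedBall.mp x.2.2
  have keyAB : ∀ a : C, a ∈ (A : Set C) ∩ closedBall 0 1 →
      infDist a ((B : Set C) ∩ closedBall 0 1) ≤ d :=
    fun a ha => le_trans (le_ciSup (hbdd A B) ⟨a, ha⟩) (le_max_left _ _)
  have keyBA : ∀ a : C, a ∈ (B : Set C) ∩ closedBall 0 1 →
      infDist a ((A : Set C) ∩ closedBall 0 1) ≤ d :=
    fun a ha => le_trans (le_ciSup (hbdd B A) ⟨a, ha⟩) (le_max_right _ _)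
  have hmemball : ∀ (f : C₀(Ω, C)), f ∈ closedBall (0 : C₀(Ω, C)) 1 →
      ∀ t : Ω, f t ∈ closedBall (0 : C) 1 := by
    intro f hf t
    rw [mem_closedBall, dist_zero_right] at hf ⊢
    calc ‖f t‖ ≤ ‖f.toBCF‖ := f.toBCF.norm_coe_le_norm t
      _ = ‖f‖ := ZeroAtInftyContinuousMap.norm_toBCF_eq_norm
      _ ≤ 1 := hf
  apply max_le
  · refine Real.iSup_le ?_ hd0
    rintro ⟨f, hfA, hfball⟩
    exact key_lemma B hd0 f fun t => keyAB _ ⟨hfA t, hmemball f hfball t⟩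
  · refine Real.iSup_le ?_ hd0
    rintro ⟨f, hfB, hfball⟩
    exact key_lemma A hd0 f fun t => keyBA _ ⟨hfB t, hmemball f hfball t⟩
end

section
/- Let 𝒞 be a C*-algebra, let 𝒜 and ℬ be C*-subalgebras of 𝒞, let Ω be a locally compact Hausdorff space, and let δ > 0. For every f in the closed unit ball of C₀(Ω, ℬ) there exists g in the closed unit ball of C₀(Ω, 𝒜) such that ‖f − g‖ ≤ d_KK(𝒜, ℬ) + 4δ (where C₀(Ω, 𝒜) and C₀(Ω, ℬ) are viewed as C*-subalgebras of C₀(Ω, 𝒞)). -/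
open Metric
open scoped ZeroAtInfty

/-- For C*-subalgebras `𝒜, ℬ` of a C*-algebra `𝒞`, a locally compact Hausdorff space `Ω` and
`δ > 0`: every `f` in the closed unit ball of `C₀(Ω, ℬ)` admits `g` in the closed unit ball of
`C₀(Ω, 𝒜)` with `‖f - g‖ ≤ d_KK(𝒜, ℬ) + 4δ`. -/
theorem exists_approx_c0
    {C : Type*} [NonUnitalNormedRing C] [StarRing C] [CStarRing C] [NormedSpace ℂ C]
    [IsScalarTower ℂ C C] [SMulCommClass ℂ C C] [StarModule ℂ C] [CompleteSpace C]
    (Ω : Type*) [TopologicalSpace Ω] [LocallyCompactSpace Ω] [T2Space Ω]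
    (A B : NonUnitalStarSubalgebra ℂ C)
    (hA : IsClosed (A : Set C)) (hB : IsClosed (B : Set C))
    (δ : ℝ) (hδ : 0 < δ)
    (f : C₀(Ω, C)) (hf : f ∈ c0ValIn (Ω := Ω) (B : Set C)) (hf1 : ‖f‖ ≤ 1) :
    ∃ g : C₀(Ω, C), g ∈ c0ValIn (Ω := Ω) (A : Set C) ∧ ‖g‖ ≤ 1 ∧
      ‖f - g‖ ≤ dKK (A : Set C) (B : Set C) + 4 * δ := by
  classical
  set d : ℝ := dKK (A : Set C) (B : Set C) with hd
  set SA : Set C := (A : Set C) ∩ closedBall (0 : C) 1 with hSA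
  set SB : Set C := (B : Set C) ∩ closedBall (0 : C) 1 with hSB
  have h0A : (0 : C) ∈ SA := ⟨A.zero_mem, mem_closedBall_self zero_le_one⟩
  have hSAne : SA.Nonempty := ⟨0, h0A⟩
  -- `dKK` is nonnegative
  have hd0 : 0 ≤ d := le_trans (Real.iSup_nonneg fun _ => infDist_nonneg) (le_max_left _ _)
  -- every point of the unit ball of `B` is within `d` of the unit ball of `A`
  have hbdd : BddAbove (Set.range fun y : ↥SB => infDist (y : C) SA) := by
    refine ⟨1, ?_⟩
    rintro r ⟨y, rfl⟩
    calc infDist (y : C) SA ≤ dist (y : C) 0 := infDist_le_dist_of_mem h0A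
      _ ≤ 1 := mem_closedBall.mp y.2.2
  have hpt : ∀ y ∈ SB, infDist y SA ≤ d := fun y hy =>
    le_trans (le_ciSup hbdd (⟨y, hy⟩ : ↥SB)) (le_max_right _ _)
  -- pointwise norm bound for `f`
  have hfval : ∀ t, ‖f t‖ ≤ 1 := fun t =>
    le_trans (by simpa [ZeroAtInftyContinuousMap.norm_toBCF_eq_norm] using
      f.toBCF.norm_coe_le_norm t) hf1
  -- choose good approximants in `A` for each value of `f`
  have hexists : ∀ t : Ω, ∃ x ∈ SA, dist (f t) x < d + δ := by
    intro t
    have hmem : f t ∈ SB :=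
      ⟨hf t, by simpa [mem_closedBall, dist_zero_right] using hfval t⟩
    have hlt : infDist (f t) SA < d + δ := lt_of_le_of_lt (hpt _ hmem) (by linarith)
    exact (infDist_lt_iff hSAne).mp hlt
  choose a haA had using hexists
  -- open neighbourhoods on which `f` varies by at most `δ`
  set U : Ω → Set Ω := fun t => {s | ‖f s - f t‖ < δ} with hU
  have hUopen : ∀ t, IsOpen (U t) := fun t =>
    isOpen_lt (((map_continuous f).sub continuous_const).norm) continuous_const
  have hUmem : ∀ t, t ∈ U t := fun t => by
    show ‖f t - f t‖ < δ
    simpa using hδ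
  -- outside a compact set `K`, `f` is small
  obtain ⟨K, hKcomp, hKsub⟩ : ∃ K : Set Ω, IsCompact K ∧ Kᶜ ⊆ {s | ‖f s‖ < δ} := by
    have h1 : Filter.Tendsto f (Filter.cocompact Ω) (nhds 0) := zero_at_infty f
    have h2 : {s | ‖f s‖ < δ} ∈ Filter.cocompact Ω := by
      have := Metric.tendsto_nhds.mp h1 δ hδ
      exact (by simpa [dist_zero_right] using this : ∀ᶠ x in Filter.cocompact Ω, ‖f x‖ < δ)
    rcases Filter.mem_cocompact.mp h2 with ⟨K, hK, hKs⟩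
    exact ⟨K, hK, hKs⟩
  -- Urysohn functions
  have hchi : ∀ t : Ω, ∃ χ : C(Ω, ℝ), HasCompactSupport χ ∧
      (∀ s, χ s ∈ Set.Icc (0 : ℝ) 1) ∧ (∀ s ∉ U t, χ s = 0) ∧
      ∃ V : Set Ω, IsOpen V ∧ t ∈ V ∧ ∀ s ∈ V, χ s = 1 := by
    intro t
    obtain ⟨N, hNc, hNint, hNsub⟩ := exists_compact_subset (hUopen t) (hUmem t)
    obtain ⟨χ, hχ1, hχ0, hχc, hχicc⟩ := exists_continuous_one_zero_of_isCompact hNc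
      (hUopen t).isClosed_compl (Set.disjoint_left.mpr fun x hx hxc => hxc (hNsub hx))
    exact ⟨χ, hχc, hχicc, fun s hs => hχ0 hs, interior N, isOpen_interior, hNint,
      fun s hs => hχ1 (interior_subset hs)⟩
  choose χ hχsupp hχicc hχzero V hVopen hVmem hV1 using hchi
  -- finite subcover of `K`
  have hcover : K ⊆ ⋃ t ∈ K, V t := fun s hs => Set.mem_biUnion hs (hVmem s)
  obtain ⟨T, hTK, hTfin, hTcov⟩ :=
    hKcomp.elim_finite_subcover_image (fun t _ => hVopen t) hcover
  set F : Finset Ω := hTfin.toFinset with hF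
  -- the normalizing function
  set Sf : Ω → ℝ := fun s => ∑ j ∈ F, χ j s with hSf
  have hSfcont : Continuous Sf := continuous_finset_sum _ fun j _ => (χ j).continuous
  set m : Ω → ℝ := fun s => max (Sf s) 1 with hm
  have hmcont : Continuous m := hSfcont.max continuous_const
  have hm1 : ∀ s, 1 ≤ m s := fun s => le_max_right _ _
  have hmpos : ∀ s, 0 < m s := fun s => lt_of_lt_of_le one_pos (hm1 s)
  set ψ : Ω → Ω → ℝ := fun j s => χ j s / m s with hψ
  have hψnn : ∀ j s, 0 ≤ ψ j s := fun j s => div_nonneg (hχicc j s).1 (hmpos s).le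
  have hψsum : ∀ s, ∑ j ∈ F, ψ j s = Sf s / m s := fun s => by
    simp only [hψ, hSf]
    exact (Finset.sum_div _ _ _).symm
  have hψsum_nn : ∀ s, 0 ≤ ∑ j ∈ F, ψ j s := fun s =>
    Finset.sum_nonneg fun j _ => hψnn j s
  have hψsum_le : ∀ s, ∑ j ∈ F, ψ j s ≤ 1 := fun s => by
    rw [hψsum]
    exact (div_le_one (hmpos s)).mpr (le_max_left _ _)
  have hSfK : ∀ s ∈ K, 1 ≤ Sf s := by
    intro s hs
    obtain ⟨j, hjT, hjV⟩ := Set.mem_iUnion₂.mp (hTcov hs)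
    have hjF : j ∈ F := hTfin.mem_toFinset.mpr hjT
    calc (1 : ℝ) = χ j s := (hV1 j s hjV).symm
      _ ≤ ∑ i ∈ F, χ i s := Finset.single_le_sum (fun i _ => (hχicc i s).1) hjF
  have hψsumK : ∀ s ∈ K, ∑ j ∈ F, ψ j s = 1 := by
    intro s hs
    rw [hψsum]
    have hms : m s = Sf s := max_eq_left (hSfK s hs)
    rw [hms]
    exact div_self (ne_of_gt (lt_of_lt_of_le one_pos (hSfK s hs)))
  -- the approximating function
  set g0 : Ω → C := fun s => ∑ j ∈ F, ψ j s • a j with hg0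
  have hgcont : Continuous g0 := by
    refine continuous_finset_sum _ fun j _ => Continuous.smul ?_ continuous_const
    exact Complex.continuous_ofReal.comp ((χ j).continuous.div hmcont fun s => (hmpos s).ne')
  have hg0supp : ∀ s ∉ ⋃ j ∈ F, tsupport (χ j), g0 s = 0 := by
    intro s hs
    refine Finset.sum_eq_zero fun j hj => ?_
    have hχ0 : χ j s = 0 :=
      image_eq_zero_of_notMem_tsupport fun h => hs (Set.mem_biUnion hj h)
    simp [hψ, hχ0]
  have hNcomp : IsCompact (⋃ j ∈ F, tsupport (χ j)) :=
    F.isCompact_biUnion fun j _ => hχsupp j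
  have hg0zero : Filter.Tendsto g0 (Filter.cocompact Ω) (nhds 0) := by
    have hmem : {s | g0 s = 0} ∈ Filter.cocompact Ω :=
      Filter.mem_cocompact.mpr ⟨_, hNcomp, fun s hs => hg0supp s hs⟩
    refine Filter.Tendsto.congr' ?_ tendsto_const_nhds
    exact Filter.eventuallyEq_of_mem hmem fun s hs => hs.symm
  set g : C₀(Ω, C) := ⟨⟨g0, hgcont⟩, hg0zero⟩ with hg
  have hgapp : ∀ s, g s = g0 s := fun s => rfl
  have hanorm : ∀ j, ‖a j‖ ≤ 1 := fun j => mem_closedBall_zero_iff.mp (haA j).2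
  refine ⟨g, ?_, ?_, ?_⟩
  · -- values in `A`
    intro s
    rw [hgapp]
    refine sum_mem fun j _ => ?_
    have h1 : ((ψ j s : ℂ)) • a j ∈ A := SMulMemClass.smul_mem _ (haA j).1
    rwa [Complex.coe_smul] at h1
  · -- norm at most one
    rw [← ZeroAtInftyContinuousMap.norm_toBCF_eq_norm]
    refine (BoundedContinuousFunction.norm_le zero_le_one).mpr fun s => ?_
    show ‖g0 s‖ ≤ 1
    calc ‖g0 s‖ ≤ ∑ j ∈ F, ‖ψ j s • a j‖ := norm_sum_le _ _
      _ ≤ ∑ j ∈ F, ψ j s := by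
          refine Finset.sum_le_sum fun j _ => ?_
          rw [norm_smul, Real.norm_of_nonneg (hψnn j s)]
          calc ψ j s * ‖a j‖ ≤ ψ j s * 1 :=
                mul_le_mul_of_nonneg_left (hanorm j) (hψnn j s)
            _ = ψ j s := mul_one _
      _ ≤ 1 := hψsum_le s
  · -- distance bound
    rw [← ZeroAtInftyContinuousMap.norm_toBCF_eq_norm]
    refine (BoundedContinuousFunction.norm_le (by linarith)).mpr fun s => ?_
    have hfg : (f - g).toBCF s = f s - g0 s := rfl
    rw [hfg]
    have key : f s - g0 s =
        (∑ j ∈ F, ψ j s • (f s - a j)) + (1 - ∑ j ∈ F, ψ j s) • f s := by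
      simp only [smul_sub, Finset.sum_sub_distrib, sub_smul, one_smul, Finset.sum_smul, hg0]
      abel
    have hterm : ∀ j ∈ F, ψ j s * ‖f s - a j‖ ≤ ψ j s * (d + 2 * δ) := by
      intro j _
      rcases eq_or_ne (χ j s) 0 with h0 | h0
      · simp [hψ, h0]
      · have hsU : s ∈ U j := by
          by_contra hsU
          exact h0 (hχzero j s hsU)
        have h1 : ‖f s - f j‖ < δ := hsU
        have h2 : ‖f j - a j‖ < d + δ := by rw [← dist_eq_norm]; exact had j
        have h3 : ‖f s - a j‖ ≤ ‖f s - f j‖ + ‖f j - a j‖ := by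
          simpa [dist_eq_norm] using dist_triangle (f s) (f j) (a j)
        exact mul_le_mul_of_nonneg_left (by linarith) (hψnn j s)
    have hsum1 : ‖∑ j ∈ F, ψ j s • (f s - a j)‖ ≤ (∑ j ∈ F, ψ j s) * (d + 2 * δ) := by
      calc ‖∑ j ∈ F, ψ j s • (f s - a j)‖ ≤ ∑ j ∈ F, ‖ψ j s • (f s - a j)‖ :=
            norm_sum_le _ _
        _ ≤ ∑ j ∈ F, ψ j s * (d + 2 * δ) := by
            refine Finset.sum_le_sum fun j hj => ?_
            rw [norm_smul, Real.norm_of_nonneg (hψnn j s)]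
            exact hterm j hj
        _ = (∑ j ∈ F, ψ j s) * (d + 2 * δ) := (Finset.sum_mul _ _ _).symm
    have hsplit : ‖f s - g0 s‖ ≤
        (∑ j ∈ F, ψ j s) * (d + 2 * δ) + ‖(1 - ∑ j ∈ F, ψ j s) • f s‖ := by
      rw [key]
      exact le_trans (norm_add_le _ _) (add_le_add_left hsum1 _)
    have hsecond : ‖(1 - ∑ j ∈ F, ψ j s) • f s‖ =
        (1 - ∑ j ∈ F, ψ j s) * ‖f s‖ := by
      rw [norm_smul, Real.norm_of_nonneg (by linarith [hψsum_le s])]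
    by_cases hsK : s ∈ K
    · have hone := hψsumK s hsK
      rw [hsecond, hone] at hsplit
      simp only [sub_self, zero_mul, add_zero, one_mul] at hsplit
      linarith
    · have hfs : ‖f s‖ < δ := hKsub hsK
      rw [hsecond] at hsplit
      have h4 : (1 - ∑ j ∈ F, ψ j s) * ‖f s‖ ≤ (1 - ∑ j ∈ F, ψ j s) * δ :=
        mul_le_mul_of_nonneg_left hfs.le (by linarith [hψsum_le s])
      have h5 : (∑ j ∈ F, ψ j s) * (d + 2 * δ) ≤ 1 * (d + 2 * δ) :=
        mul_le_mul_of_nonneg_right (hψsum_le s) (by linarith)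
      nlinarith [hψsum_nn s]
end

section
/- Let 𝒞 be a C*-algebra, let 𝒜 and ℬ be C*-subalgebras of 𝒞, and let Ω be a nonempty compact Hausdorff space. Then d₀(C(Ω, 𝒜), C(Ω, ℬ)) = d₀(𝒜, ℬ), where C(Ω, 𝒜) and C(Ω, ℬ) are viewed as C*-subalgebras of C(Ω, 𝒞). (Equivalently: for a commutative unital C*-algebra 𝒟, d₀(𝒜 ⊗min 𝒟, ℬ ⊗min 𝒟) = d₀(𝒜, ℬ).) -/
open Metric

/-- Easy direction: near inclusion of function spaces gives near inclusion of fibers,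
using constant functions. -/
theorem nearIncl_of_contValIn
    {C : Type*} [NonUnitalNormedRing C]
    {Ω : Type*} [TopologicalSpace Ω] [CompactSpace Ω] [Nonempty Ω]
    {A B : Set C} {γ : ℝ}
    (h : nearIncl (contValIn (Ω := Ω) A) (contValIn (Ω := Ω) B) γ) :
    nearIncl A B γ := by
  intro x ⟨hxA, hx1⟩
  rw [mem_closedBall_zero_iff] at hx1
  have hmem : (ContinuousMap.const Ω x) ∈
      contValIn (Ω := Ω) A ∩ closedBall (0 : C(Ω, C)) 1 := by
    refine ⟨fun t => hxA, ?_⟩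
    rw [mem_closedBall_zero_iff]
    exact (ContinuousMap.norm_le _ one_pos.le).2 fun t => hx1
  obtain ⟨g, hgB, hgd⟩ := h _ hmem
  obtain t0 := Classical.arbitrary Ω
  refine ⟨g t0, hgB t0, ?_⟩
  calc ‖x - g t0‖ = ‖(ContinuousMap.const Ω x - g) t0‖ := by simp
    _ ≤ ‖ContinuousMap.const Ω x - g‖ := ContinuousMap.norm_coe_le_norm _ _
    _ ≤ γ := hgd

/-- Hard direction: a pointwise near inclusion yields a near inclusion of the spaces of
continuous functions, up to an arbitrarily small loss `ε`, via a partition of unity. -/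
theorem nearIncl_contValIn
    {C : Type*} [NonUnitalNormedRing C] [StarRing C] [NormedSpace ℂ C]
    {Ω : Type*} [TopologicalSpace Ω] [CompactSpace Ω] [T2Space Ω]
    {A : Set C} (B : NonUnitalStarSubalgebra ℂ C) {γ ε : ℝ} (hγ : 0 ≤ γ) (hε : 0 < ε)
    (h : nearIncl A (B : Set C) γ) :
    nearIncl (contValIn (Ω := Ω) A) (contValIn (Ω := Ω) (B : Set C)) (γ + ε) := by
  intro f ⟨hfA, hf1⟩
  rw [mem_closedBall_zero_iff] at hf1
  -- choose pointwise approximants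
  have hpt : ∀ t : Ω, ∃ b ∈ (B : Set C), ‖f t - b‖ ≤ γ := by
    intro t
    refine h (f t) ⟨hfA t, ?_⟩
    rw [mem_closedBall_zero_iff]
    exact (ContinuousMap.norm_coe_le_norm f t).trans hf1
  choose b hbB hbd using hpt
  -- open cover
  set U : Ω → Set Ω := fun t => {s | ‖f s - b t‖ < γ + ε} with hU
  have hUopen : ∀ t, IsOpen (U t) := by
    intro t
    exact isOpen_lt (by fun_prop) continuous_const
  have hUcover : (Set.univ : Set Ω) ⊆ ⋃ t, U t := by
    intro s _
    exact Set.mem_iUnion.2 ⟨s, lt_of_le_of_lt (hbd s) (lt_add_of_pos_right γ hε)⟩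
  obtain ⟨T, hT⟩ := isCompact_univ.elim_finite_subcover U hUopen hUcover
  -- partition of unity indexed by the finite set T
  have hT' : (Set.univ : Set Ω) ⊆ ⋃ i : T, U i := by
    intro s hs
    obtain ⟨t, ht, hst⟩ := Set.mem_iUnion₂.1 (hT hs)
    exact Set.mem_iUnion.2 ⟨⟨t, ht⟩, hst⟩
  obtain ⟨ρ, hρ⟩ := PartitionOfUnity.exists_isSubordinate isClosed_univ
    (fun i : T => U i) (fun i => hUopen i) hT'
  -- the approximating function
  set g : C(Ω, C) := ⟨fun s => ∑ i : T, (ρ i s) • b i, by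
    refine continuous_finset_sum _ fun i _ => ?_
    exact ((ρ i).continuous).smul continuous_const⟩ with hg
  have hsum : ∀ s : Ω, ∑ i : T, ρ i s = 1 := by
    intro s
    have := ρ.sum_eq_one (Set.mem_univ s)
    rwa [finsum_eq_sum_of_fintype] at this
  refine ⟨g, ?_, ?_⟩
  · intro s
    refine sum_mem fun i _ => ?_
    rw [← Complex.coe_smul]
    exact SMulMemClass.smul_mem _ (hbB i)
  · refine (ContinuousMap.norm_le _ (by linarith)).2 fun s => ?_
    have hdecomp : f s - g s = ∑ i : T, (ρ i s) • (f s - b i) := by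
      simp only [smul_sub, Finset.sum_sub_distrib, ← Finset.sum_smul, hsum s, one_smul]
      rfl
    rw [ContinuousMap.sub_apply, hdecomp]
    calc ‖∑ i : T, (ρ i s) • (f s - b i)‖
        ≤ ∑ i : T, ‖(ρ i s) • (f s - b i)‖ := norm_sum_le _ _
      _ ≤ ∑ i : T, (ρ i s) * (γ + ε) := by
          refine Finset.sum_le_sum fun i _ => ?_
          rw [norm_smul, Real.norm_eq_abs, abs_of_nonneg (ρ.nonneg i s)]
          rcases eq_or_ne (ρ i s) 0 with h0 | h0
          · simp [h0]
          · refine mul_le_mul_of_nonneg_left ?_ (ρ.nonneg i s)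
            have hsupp : s ∈ U i := hρ i (subset_tsupport _ (by simpa using h0))
            exact le_of_lt hsupp
      _ = γ + ε := by rw [← Finset.sum_mul, hsum s, one_mul]

/-- For C*-subalgebras `𝒜, ℬ` of a C*-algebra `𝒞` and a nonempty compact Hausdorff space `Ω`,
`d₀(C(Ω, 𝒜), C(Ω, ℬ)) = d₀(𝒜, ℬ)`. -/
theorem d0_contMap_eq_d0
    {C : Type*} [NonUnitalNormedRing C] [StarRing C] [CStarRing C] [NormedSpace ℂ C]
    [IsScalarTower ℂ C C] [SMulCommClass ℂ C C] [StarModule ℂ C] [CompleteSpace C]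
    (Ω : Type*) [TopologicalSpace Ω] [CompactSpace Ω] [T2Space Ω] [Nonempty Ω]
    (A B : NonUnitalStarSubalgebra ℂ C)
    (hA : IsClosed (A : Set C)) (hB : IsClosed (B : Set C)) :
    d0 (contValIn (Ω := Ω) (A : Set C)) (contValIn (Ω := Ω) (B : Set C)) =
      d0 (A : Set C) (B : Set C) := by
  set Sf := {γ : ℝ | 0 < γ ∧ nearIncl (contValIn (Ω := Ω) (A : Set C))
      (contValIn (Ω := Ω) (B : Set C)) γ ∧
      nearIncl (contValIn (Ω := Ω) (B : Set C)) (contValIn (Ω := Ω) (A : Set C)) γ} with hSf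
  set Sp := {γ : ℝ | 0 < γ ∧ nearIncl (A : Set C) (B : Set C) γ ∧
      nearIncl (B : Set C) (A : Set C) γ} with hSp
  have hsub : Sf ⊆ Sp := fun γ ⟨hγ, h1, h2⟩ =>
    ⟨hγ, nearIncl_of_contValIn h1, nearIncl_of_contValIn h2⟩
  have hup : ∀ γ ∈ Sp, ∀ ε : ℝ, 0 < ε → γ + ε ∈ Sf := by
    rintro γ ⟨hγ, h1, h2⟩ ε hε
    exact ⟨by linarith, nearIncl_contValIn B hγ.le hε h1, nearIncl_contValIn A hγ.le hε h2⟩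
  have hbddf : BddBelow Sf := ⟨0, fun γ hγ => hγ.1.le⟩
  have hbddp : BddBelow Sp := ⟨0, fun γ hγ => hγ.1.le⟩
  show sInf Sf = sInf Sp
  rcases Set.eq_empty_or_nonempty Sp with hSpe | hSpn
  · have hSfe : Sf = ∅ := Set.eq_empty_of_subset_empty (hSpe ▸ hsub)
    rw [hSpe, hSfe]
  · have h1 : sInf Sf ≤ sInf Sp := by
      refine le_csInf hSpn fun γ hγ => ?_
      refine le_of_forall_pos_le_add fun ε hε => ?_
      exact csInf_le hbddf (hup γ hγ ε hε)
    have h2 : sInf Sp ≤ sInf Sf := by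
      rcases Set.eq_empty_or_nonempty Sf with hSfe | hSfn
      · obtain ⟨γ, hγ⟩ := hSpn
        exact absurd (hup γ hγ 1 one_pos) (hSfe ▸ fun h => h)
      · exact csInf_le_csInf hbddp hSfn hsub
    linarith
end

section
/- Let 𝒞 be a C*-algebra, let 𝒜 and ℬ be C*-subalgebras of 𝒞, and let Ω be a nonempty compact Hausdorff space. Then d_KK(C(Ω, 𝒜), C(Ω, ℬ)) = d_KK(𝒜, ℬ), where C(Ω, 𝒜) and C(Ω, ℬ) are viewed as C*-subalgebras of C(Ω, 𝒞). (Equivalently: for a commutative unital C*-algebra 𝒟, d_KK(𝒜 ⊗min 𝒟, ℬ ⊗min 𝒟) = d_KK(𝒜, ℬ).) -/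
open Metric

section aux
set_option linter.unusedSectionVars false

variable {C : Type*} [NonUnitalNormedRing C] [StarRing C] [CStarRing C] [NormedSpace ℂ C]
    [IsScalarTower ℂ C C] [SMulCommClass ℂ C C] [StarModule ℂ C] [CompleteSpace C]
    {Ω : Type*} [TopologicalSpace Ω] [CompactSpace Ω] [T2Space Ω] [Nonempty Ω]

lemma aux_ne (A : NonUnitalStarSubalgebra ℂ C) : ((A : Set C) ∩ closedBall 0 1).Nonempty :=
  ⟨0, A.zero_mem, mem_closedBall_self zero_le_one⟩

lemma aux_neF (A : NonUnitalStarSubalgebra ℂ C) :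
    (contValIn (Ω := Ω) (A : Set C) ∩ closedBall 0 1).Nonempty :=
  ⟨0, fun _ => A.zero_mem, mem_closedBall_self zero_le_one⟩

lemma norm_le_of_ball {X : Type*} [SeminormedAddCommGroup X] {x : X}
    (h : x ∈ closedBall (0:X) 1) : ‖x‖ ≤ 1 := by
  simpa [mem_closedBall, dist_zero_right] using h

lemma aux_bdd (A B : NonUnitalStarSubalgebra ℂ C) :
    BddAbove (Set.range fun x : ↥((A : Set C) ∩ closedBall 0 1) =>
      infDist (x : C) ((B : Set C) ∩ closedBall 0 1)) := by
  refine ⟨1, ?_⟩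
  rintro r ⟨x, rfl⟩
  calc infDist (x : C) ((B : Set C) ∩ closedBall 0 1) ≤ dist (x : C) 0 :=
        infDist_le_dist_of_mem ⟨B.zero_mem, mem_closedBall_self zero_le_one⟩
    _ ≤ 1 := by simpa [dist_zero_right] using norm_le_of_ball x.2.2

lemma aux_bddF (A B : NonUnitalStarSubalgebra ℂ C) :
    BddAbove (Set.range fun f : ↥(contValIn (Ω := Ω) (A : Set C) ∩ closedBall 0 1) =>
      infDist (f : C(Ω, C)) (contValIn (Ω := Ω) (B : Set C) ∩ closedBall 0 1)) := by
  refine ⟨1, ?_⟩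
  rintro r ⟨f, rfl⟩
  calc infDist (f : C(Ω,C)) (contValIn (Ω := Ω) (B : Set C) ∩ closedBall 0 1)
        ≤ dist (f : C(Ω,C)) 0 :=
        infDist_le_dist_of_mem ⟨fun _ => B.zero_mem, mem_closedBall_self zero_le_one⟩
    _ ≤ 1 := by simpa [dist_zero_right] using norm_le_of_ball f.2.2

/-- lower bound: sup over points ≤ sup over functions -/
lemma le1 (A B : NonUnitalStarSubalgebra ℂ C) :
    (⨆ x : ↥((A : Set C) ∩ closedBall 0 1), infDist (x : C) ((B : Set C) ∩ closedBall 0 1)) ≤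
    ⨆ f : ↥(contValIn (Ω := Ω) (A : Set C) ∩ closedBall 0 1),
      infDist (f : C(Ω, C)) (contValIn (Ω := Ω) (B : Set C) ∩ closedBall 0 1) := by
  have : Nonempty ↥((A : Set C) ∩ closedBall 0 1) := (aux_ne A).to_subtype
  refine ciSup_le fun x => ?_
  set fc : C(Ω, C) := ContinuousMap.const Ω (x : C) with hfc
  have hmem : fc ∈ contValIn (Ω := Ω) (A : Set C) ∩ closedBall 0 1 := by
    refine ⟨fun _ => x.2.1, ?_⟩
    simp only [mem_closedBall, dist_zero_right, hfc]
    exact (ContinuousMap.norm_le _ zero_le_one).2 fun t => norm_le_of_ball x.2.2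
  have key : infDist (x : C) ((B : Set C) ∩ closedBall 0 1) ≤
      infDist fc (contValIn (Ω := Ω) (B : Set C) ∩ closedBall 0 1) := by
    by_contra h
    push_neg at h
    obtain ⟨g, hg, hdg⟩ := (infDist_lt_iff (aux_neF B)).1 h
    obtain ⟨t0⟩ := ‹Nonempty Ω›
    have h1 : infDist (x : C) ((B : Set C) ∩ closedBall 0 1) ≤ dist (x : C) (g t0) :=
      infDist_le_dist_of_mem ⟨hg.1 t0, by
        simpa [mem_closedBall, dist_zero_right] using
          (g.norm_coe_le_norm t0).trans (norm_le_of_ball hg.2)⟩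
    have h2 : dist (x : C) (g t0) ≤ dist fc g := by
      simpa [hfc] using ContinuousMap.dist_apply_le_dist (f := fc) (g := g) t0
    linarith
  exact key.trans (le_ciSup (aux_bddF A B) ⟨fc, hmem⟩)

/-- upper bound: sup over functions ≤ sup over points -/
lemma le2 (A B : NonUnitalStarSubalgebra ℂ C) :
    (⨆ f : ↥(contValIn (Ω := Ω) (A : Set C) ∩ closedBall 0 1),
      infDist (f : C(Ω, C)) (contValIn (Ω := Ω) (B : Set C) ∩ closedBall 0 1)) ≤
    ⨆ x : ↥((A : Set C) ∩ closedBall 0 1), infDist (x : C) ((B : Set C) ∩ closedBall 0 1) := by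
  have hne : Nonempty ↥(contValIn (Ω := Ω) (A : Set C) ∩ closedBall 0 1) := (aux_neF A).to_subtype
  have : Nonempty ↥((A : Set C) ∩ closedBall 0 1) := (aux_ne A).to_subtype
  set s := ⨆ x : ↥((A : Set C) ∩ closedBall 0 1), infDist (x : C) ((B : Set C) ∩ closedBall 0 1)
    with hs
  have hs0 : 0 ≤ s := le_ciSup_of_le (aux_bdd A B) (Classical.arbitrary _) infDist_nonneg
  refine ciSup_le fun f => le_of_forall_pos_le_add fun ε hε => ?_
  -- for each t, choose b t ∈ B ∩ ball with dist (f t) (b t) < s + ε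
  have hft : ∀ t : Ω, ((f : C(Ω,C)) t) ∈ (A : Set C) ∩ closedBall 0 1 := fun t =>
    ⟨f.2.1 t, by simpa [mem_closedBall, dist_zero_right] using
      ((f : C(Ω,C)).norm_coe_le_norm t).trans (norm_le_of_ball f.2.2)⟩
  have hchoice : ∀ t : Ω, ∃ b ∈ (B : Set C) ∩ closedBall 0 1,
      dist ((f : C(Ω,C)) t) b < s + ε := by
    intro t
    refine (infDist_lt_iff (aux_ne B)).1 ?_
    have : infDist ((f : C(Ω,C)) t) ((B : Set C) ∩ closedBall 0 1) ≤ s :=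
      le_ciSup (aux_bdd A B) (⟨_, hft t⟩ : ↥((A : Set C) ∩ closedBall 0 1))
    linarith
  choose b hbB hbd using hchoice
  set U : Ω → Set Ω := fun t => {u | dist ((f : C(Ω,C)) u) (b t) < s + ε} with hU
  have hUopen : ∀ t, IsOpen (U t) := fun t =>
    isOpen_lt (Continuous.dist (f : C(Ω,C)).continuous continuous_const) continuous_const
  have hUcover : (Set.univ : Set Ω) ⊆ ⋃ t, U t := fun t _ => Set.mem_iUnion.2 ⟨t, hbd t⟩
  obtain ⟨F, hF⟩ := isCompact_univ.elim_finite_subcover U hUopen hUcover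
  have hcover' : (Set.univ : Set Ω) ⊆ ⋃ i : ↥F, U i := by
    intro u hu
    obtain ⟨t, ht, htu⟩ := Set.mem_iUnion₂.1 (hF hu)
    exact Set.mem_iUnion.2 ⟨⟨t, ht⟩, htu⟩
  obtain ⟨φ, hφ⟩ := PartitionOfUnity.exists_isSubordinate isClosed_univ
    (fun i : ↥F => U i) (fun i => hUopen i) hcover'
  -- define g
  have hgcont : Continuous fun u : Ω => ∑ i : ↥F, φ i u • b i :=
    continuous_finset_sum _ fun i _ => ((φ i).continuous).smul continuous_const
  set g : C(Ω, C) := ⟨fun u => ∑ i : ↥F, φ i u • b i, hgcont⟩ with hg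
  have hsum1 : ∀ u : Ω, ∑ i : ↥F, φ i u = 1 := fun u => by
    rw [← finsum_eq_sum_of_fintype]
    exact φ.sum_eq_one (Set.mem_univ u)
  have hgB : g ∈ contValIn (Ω := Ω) (B : Set C) ∩ closedBall 0 1 := by
    constructor
    · intro u
      refine sum_mem fun i _ => ?_
      rw [← Complex.coe_smul]
      exact B.smul_mem _ (hbB i).1
    · rw [mem_closedBall, dist_zero_right]
      refine (g.norm_le (by linarith : (0:ℝ) ≤ 1)).2 fun u => ?_
      calc ‖g u‖ ≤ ∑ i : ↥F, ‖φ i u • b i‖ := norm_sum_le _ _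
        _ ≤ ∑ i : ↥F, φ i u := by
            refine Finset.sum_le_sum fun i _ => ?_
            rw [norm_smul, Real.norm_eq_abs, abs_of_nonneg (φ.nonneg i u)]
            exact mul_le_of_le_one_right (φ.nonneg i u) (norm_le_of_ball (hbB i).2)
        _ = 1 := hsum1 u
  have hdist : dist (f : C(Ω,C)) g ≤ s + ε := by
    rw [dist_eq_norm]
    refine (ContinuousMap.norm_le _ (by linarith)).2 fun u => ?_
    have heq : (f : C(Ω,C)) u - g u = ∑ i : ↥F, φ i u • ((f : C(Ω,C)) u - b i) := by
      simp only [smul_sub, Finset.sum_sub_distrib, ← Finset.sum_smul, hsum1 u, one_smul,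
        ContinuousMap.sub_apply, hg, ContinuousMap.coe_mk]
    rw [ContinuousMap.sub_apply, heq]
    calc ‖∑ i : ↥F, φ i u • ((f : C(Ω,C)) u - b i)‖
        ≤ ∑ i : ↥F, ‖φ i u • ((f : C(Ω,C)) u - b i)‖ := norm_sum_le _ _
      _ ≤ ∑ i : ↥F, φ i u * (s + ε) := by
          refine Finset.sum_le_sum fun i _ => ?_
          rw [norm_smul, Real.norm_eq_abs, abs_of_nonneg (φ.nonneg i u)]
          rcases eq_or_ne (φ i u) 0 with h0 | h0
          · simp [h0]
          · refine mul_le_mul_of_nonneg_left ?_ (φ.nonneg i u)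
            have hu : u ∈ U i := hφ i (subset_tsupport _ h0)
            rw [← dist_eq_norm]
            exact le_of_lt hu
      _ = s + ε := by rw [← Finset.sum_mul, hsum1 u, one_mul]
  exact infDist_le_dist_of_mem hgB |>.trans hdist



end aux

/-- For C*-subalgebras `𝒜, ℬ` of a C*-algebra `𝒞` and a nonempty compact Hausdorff space `Ω`,
`d_KK(C(Ω, 𝒜), C(Ω, ℬ)) = d_KK(𝒜, ℬ)`. -/
theorem dKK_contMap_eq_dKK
    {C : Type*} [NonUnitalNormedRing C] [StarRing C] [CStarRing C] [NormedSpace ℂ C]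
    [IsScalarTower ℂ C C] [SMulCommClass ℂ C C] [StarModule ℂ C] [CompleteSpace C]
    (Ω : Type*) [TopologicalSpace Ω] [CompactSpace Ω] [T2Space Ω] [Nonempty Ω]
    (A B : NonUnitalStarSubalgebra ℂ C)
    (hA : IsClosed (A : Set C)) (hB : IsClosed (B : Set C)) :
    dKK (contValIn (Ω := Ω) (A : Set C)) (contValIn (Ω := Ω) (B : Set C)) =
      dKK (A : Set C) (B : Set C) := by
  unfold dKK
  exact le_antisymm (max_le_max (le2 A B) (le2 B A)) (max_le_max (le1 A B) (le1 B A))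
end

section
/- Let 𝒞 be a C*-algebra, let 𝒜 and ℬ be finite-dimensional *-subalgebras of 𝒞, and let Ω be a nonempty locally compact Hausdorff space. Then d_KK(𝒜, ℬ) = d_KK(C₀(Ω, 𝒜), C₀(Ω, ℬ)), where C₀(Ω, 𝒜) and C₀(Ω, ℬ) are viewed as C*-subalgebras of C₀(Ω, 𝒞). -/
open Metric
open scoped ZeroAtInfty

open Filter Topology ZeroAtInftyContinuousMap in
/-- One-sided version: the supremum over the unit ball of `C₀(Ω, 𝒜)` of the distance to the unit
ball of `C₀(Ω, ℬ)` equals the corresponding supremum at the level of `𝒜` and `ℬ`. -/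
lemma c0_sup_eq_aux
    {C : Type*} [NonUnitalNormedRing C] [StarRing C] [CStarRing C] [NormedSpace ℂ C]
    [IsScalarTower ℂ C C] [SMulCommClass ℂ C C] [StarModule ℂ C] [CompleteSpace C]
    (Ω : Type*) [TopologicalSpace Ω] [LocallyCompactSpace Ω] [T2Space Ω] [Nonempty Ω]
    (A B : NonUnitalStarSubalgebra ℂ C) [FiniteDimensional ℂ A] :
    (⨆ f : ↥(c0ValIn (Ω := Ω) (A : Set C) ∩ closedBall (0 : C₀(Ω, C)) 1),
        infDist (f : C₀(Ω, C)) (c0ValIn (Ω := Ω) (B : Set C) ∩ closedBall (0 : C₀(Ω, C)) 1))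
      = ⨆ x : ↥((A : Set C) ∩ closedBall (0 : C) 1),
          infDist (x : C) ((B : Set C) ∩ closedBall (0 : C) 1) := by
  set KA : Set C := (A : Set C) ∩ closedBall (0 : C) 1 with hKAdef
  set KB : Set C := (B : Set C) ∩ closedBall (0 : C) 1 with hKBdef
  set FA : Set C₀(Ω, C) := c0ValIn (Ω := Ω) (A : Set C) ∩ closedBall (0 : C₀(Ω, C)) 1 with hFAdef
  set FB : Set C₀(Ω, C) := c0ValIn (Ω := Ω) (B : Set C) ∩ closedBall (0 : C₀(Ω, C)) 1 with hFBdef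
  have h0A : (0 : C) ∈ KA := ⟨zero_mem A, mem_closedBall_self zero_le_one⟩
  have h0B : (0 : C) ∈ KB := ⟨zero_mem B, mem_closedBall_self zero_le_one⟩
  have h0FB : (0 : C₀(Ω, C)) ∈ FB :=
    ⟨fun t => by simpa using zero_mem B, mem_closedBall_self zero_le_one⟩
  have h0FA : (0 : C₀(Ω, C)) ∈ FA :=
    ⟨fun t => by simpa using zero_mem A, mem_closedBall_self zero_le_one⟩
  haveI : Nonempty ↥KA := ⟨⟨0, h0A⟩⟩
  haveI : Nonempty ↥FA := ⟨⟨0, h0FA⟩⟩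
  have hbddA : BddAbove (Set.range fun x : ↥KA => infDist (x : C) KB) := by
    refine ⟨1, ?_⟩
    rintro _ ⟨x, rfl⟩
    refine le_trans (infDist_le_dist_of_mem h0B) ?_
    simpa [dist_zero_right] using mem_closedBall_zero_iff.1 x.2.2
  have hbddF : BddAbove (Set.range fun f : ↥FA => infDist (f : C₀(Ω, C)) FB) := by
    refine ⟨1, ?_⟩
    rintro _ ⟨f, rfl⟩
    refine le_trans (infDist_le_dist_of_mem h0FB) ?_
    simpa [dist_zero_right] using mem_closedBall_zero_iff.1 f.2.2
  set sA : ℝ := ⨆ x : ↥KA, infDist (x : C) KB with hsAdef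
  have hsA_nonneg : 0 ≤ sA :=
    le_trans infDist_nonneg (le_ciSup hbddA ⟨0, h0A⟩)
  refine le_antisymm ?_ ?_
  · -- hard direction
    refine ciSup_le ?_
    rintro ⟨f, hfA, hf1⟩
    refine le_of_forall_pos_le_add ?_
    intro ε hε
    set δ : ℝ := ε / 4 with hδdef
    have hδ : 0 < δ := by positivity
    have hnorm_f : ∀ t, ‖f t‖ ≤ 1 := by
      intro t
      refine le_trans (f.toBCF.norm_coe_le_norm t) ?_
      rw [norm_toBCF_eq_norm]
      exact mem_closedBall_zero_iff.1 hf1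
    have hfK : ∀ t, f t ∈ KA := fun t => ⟨hfA t, mem_closedBall_zero_iff.2 (hnorm_f t)⟩
    -- compactness of the unit ball of A
    have hKA_compact : IsCompact KA := by
      have h1 : IsCompact (closedBall (0 : A) 1) := isCompact_closedBall _ _
      have h2 : KA = ((↑) : A → C) '' closedBall (0 : A) 1 := by
        ext y
        constructor
        · rintro ⟨hyA, hy1⟩
          exact ⟨⟨y, hyA⟩, by simpa [mem_closedBall_zero_iff] using
            mem_closedBall_zero_iff.1 hy1, rfl⟩
        · rintro ⟨⟨y, hyA⟩, hy1, rfl⟩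
          exact ⟨hyA, by simpa [mem_closedBall_zero_iff] using mem_closedBall_zero_iff.1 hy1⟩
      rw [h2]
      exact h1.image continuous_subtype_val
    -- finite δ-net
    obtain ⟨T', hT'K, hT'fin, hcover⟩ :=
      hKA_compact.elim_finite_subcover_image (fun z _ => isOpen_ball)
        (fun z hz => Set.mem_iUnion₂.2 ⟨z, hz, mem_ball_self hδ⟩)
    set T : Finset C := hT'fin.toFinset with hTdef
    have hTmem : ∀ z, z ∈ T ↔ z ∈ T' := fun z => hT'fin.mem_toFinset
    -- choose near points in B
    have hsel : ∀ z ∈ T', ∃ y, y ∈ KB ∧ dist z y < sA + δ := by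
      intro z hz
      have h1 : infDist z KB ≤ sA := le_ciSup hbddA ⟨z, hT'K hz⟩
      have h2 : infDist z KB < sA + δ := lt_of_le_of_lt h1 (by linarith)
      obtain ⟨y, hy, hy'⟩ := (infDist_lt_iff ⟨0, h0B⟩).1 h2
      exact ⟨y, hy, hy'⟩
    choose! c hc1 hc2 using hsel
    -- partition of unity
    set ψ : C → C → ℝ := fun z y => max (δ - dist y z) 0 with hψdef
    set D : C → ℝ := fun y => ∑ z ∈ T, ψ z y with hDdef
    have hψ_nonneg : ∀ z y, 0 ≤ ψ z y := fun _ _ => le_max_right _ _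
    have hD_pos : ∀ y ∈ KA, 0 < D y := by
      intro y hy
      obtain ⟨z, hz, hyz⟩ := Set.mem_iUnion₂.1 (hcover hy)
      have h1 : 0 < ψ z y := lt_max_of_lt_left (by simpa [sub_pos] using mem_ball.1 hyz)
      have h2 : ψ z y ≤ D y :=
        Finset.single_le_sum (fun i _ => hψ_nonneg i y) ((hTmem z).2 hz)
      linarith
    have hD_pos' : ∀ t, 0 < D (f t) := fun t => hD_pos _ (hfK t)
    set lam : Ω → C → ℝ := fun t z => min 1 (‖f t‖ / δ) * (ψ z (f t) / D (f t)) with hlamdef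
    set hh : Ω → ℝ := fun t => min 1 (‖f t‖ / δ) with hhdef
    have hh_nonneg : ∀ t, 0 ≤ hh t := fun t => le_min zero_le_one (by positivity)
    have hh_le_one : ∀ t, hh t ≤ 1 := fun t => min_le_left _ _
    have hlam_nonneg : ∀ t z, 0 ≤ lam t z := by
      intro t z
      have := hψ_nonneg z (f t)
      have := (hD_pos' t).le
      have := hh_nonneg t
      positivity
    have hlam_sum : ∀ t, ∑ z ∈ T, lam t z = hh t := by
      intro t
      rw [hlamdef]
      simp only
      rw [← Finset.mul_sum, ← Finset.sum_div, div_self (hD_pos' t).ne', mul_one]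
    set g0 : Ω → C := fun t => ∑ z ∈ T, lam t z • c z with hg0def
    have hg0_norm : ∀ t, ‖g0 t‖ ≤ hh t := by
      intro t
      calc ‖∑ z ∈ T, lam t z • c z‖ ≤ ∑ z ∈ T, ‖lam t z • c z‖ := norm_sum_le _ _
        _ ≤ ∑ z ∈ T, lam t z := by
            refine Finset.sum_le_sum fun z hz => ?_
            rw [norm_smul, Real.norm_of_nonneg (hlam_nonneg t z)]
            have hcz : ‖c z‖ ≤ 1 :=
              mem_closedBall_zero_iff.1 (hc1 z ((hTmem z).1 hz)).2
            calc lam t z * ‖c z‖ ≤ lam t z * 1 :=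
                  mul_le_mul_of_nonneg_left hcz (hlam_nonneg t z)
              _ = lam t z := mul_one _
        _ = hh t := hlam_sum t
    -- continuity
    have hψc : ∀ z : C, Continuous fun t => ψ z (f t) :=
      fun z => (continuous_const.sub ((map_continuous f).dist continuous_const)).max
        continuous_const
    have hDc : Continuous fun t => D (f t) := continuous_finset_sum _ fun z _ => hψc z
    have hhc : Continuous hh :=
      continuous_const.min ((map_continuous f).norm.div_const δ)
    have hlamc : ∀ z : C, Continuous fun t => lam t z := fun z =>
      hhc.mul ((hψc z).div hDc fun t => (hD_pos' t).ne')
    have hg0c : Continuous g0 :=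
      continuous_finset_sum _ fun z _ => (hlamc z).smul continuous_const
    -- zero at infinity
    have htends : Tendsto hh (cocompact Ω) (𝓝 0) := by
      have h0 : Tendsto (fun t => ‖f t‖ / δ) (cocompact Ω) (𝓝 0) := by
        simpa using (zero_at_infty f).norm.div_const δ
      have h1 : Tendsto (fun t => min 1 (‖f t‖ / δ)) (cocompact Ω) (𝓝 (min 1 0)) :=
        tendsto_const_nhds.min h0
      simpa using h1
    set g : C₀(Ω, C) := ⟨⟨g0, hg0c⟩, squeeze_zero_norm hg0_norm htends⟩ with hgdef
    have hgFB : g ∈ FB := by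
      constructor
      · intro t
        refine sum_mem fun z hz => ?_
        rw [← Complex.coe_smul]
        exact SMulMemClass.smul_mem _ (hc1 z ((hTmem z).1 hz)).1
      · rw [mem_closedBall_zero_iff, ← norm_toBCF_eq_norm]
        refine (BoundedContinuousFunction.norm_le zero_le_one).2 fun t => ?_
        exact le_trans (hg0_norm t) (hh_le_one t)
    have hdist : dist f g ≤ sA + 3 * δ := by
      rw [dist_eq_norm, ← norm_toBCF_eq_norm]
      refine (BoundedContinuousFunction.norm_le (by linarith)).2 fun t => ?_
      have hval : (f - g).toBCF t = f t - g0 t := rfl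
      rw [hval]
      -- decomposition
      have hdec : f t - g0 t = (1 - hh t) • f t + ∑ z ∈ T, lam t z • (f t - c z) := by
        have h1 : ∑ z ∈ T, lam t z • (f t - c z)
            = (∑ z ∈ T, lam t z) • f t - g0 t := by
          rw [Finset.sum_smul]
          rw [← Finset.sum_sub_distrib]
          exact Finset.sum_congr rfl fun z _ => smul_sub _ _ _
        rw [h1, hlam_sum t, sub_smul, one_smul]
        abel
      rw [hdec]
      have h2 : ‖∑ z ∈ T, lam t z • (f t - c z)‖ ≤ sA + 2 * δ := by
        calc ‖∑ z ∈ T, lam t z • (f t - c z)‖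
            ≤ ∑ z ∈ T, ‖lam t z • (f t - c z)‖ := norm_sum_le _ _
          _ ≤ ∑ z ∈ T, lam t z * (sA + 2 * δ) := by
              refine Finset.sum_le_sum fun z hz => ?_
              rw [norm_smul, Real.norm_of_nonneg (hlam_nonneg t z)]
              by_cases hzero : ψ z (f t) = 0
              · simp [hlamdef, hzero]
              · have hpos : 0 < δ - dist (f t) z := by
                  by_contra hcon
                  push_neg at hcon
                  exact hzero (max_eq_right hcon)
                have hd1 : dist (f t) (c z) ≤ dist (f t) z + dist z (c z) :=
                  dist_triangle _ _ _
                have hd2 : dist z (c z) < sA + δ := hc2 z ((hTmem z).1 hz)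
                have hd3 : ‖f t - c z‖ ≤ sA + 2 * δ := by
                  rw [← dist_eq_norm]
                  linarith
                exact mul_le_mul_of_nonneg_left hd3 (hlam_nonneg t z)
          _ = (∑ z ∈ T, lam t z) * (sA + 2 * δ) := (Finset.sum_mul _ _ _).symm
          _ = hh t * (sA + 2 * δ) := by rw [hlam_sum t]
          _ ≤ 1 * (sA + 2 * δ) :=
              mul_le_mul_of_nonneg_right (hh_le_one t) (by linarith)
          _ = sA + 2 * δ := one_mul _
      have h3 : ‖(1 - hh t) • f t‖ ≤ δ := by
        rw [norm_smul, Real.norm_of_nonneg (by linarith [hh_le_one t] : (0:ℝ) ≤ 1 - hh t)]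
        rcases le_or_gt (‖f t‖) δ with hle | hlt
        · calc (1 - hh t) * ‖f t‖ ≤ 1 * ‖f t‖ :=
              mul_le_mul_of_nonneg_right (by linarith [hh_nonneg t]) (norm_nonneg _)
            _ ≤ δ := by rwa [one_mul]
        · have : hh t = 1 := by
            rw [hhdef]
            simp only
            rw [min_eq_left]
            rw [le_div_iff₀ hδ]
            linarith
          rw [this]
          simp [hδ.le]
      calc ‖(1 - hh t) • f t + ∑ z ∈ T, lam t z • (f t - c z)‖
          ≤ ‖(1 - hh t) • f t‖ + ‖∑ z ∈ T, lam t z • (f t - c z)‖ := norm_add_le _ _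
        _ ≤ δ + (sA + 2 * δ) := add_le_add h3 h2
        _ = sA + 3 * δ := by ring
    have hfinal : infDist (f : C₀(Ω, C)) FB ≤ sA + 3 * δ :=
      le_trans (infDist_le_dist_of_mem hgFB) hdist
    have : 3 * δ ≤ ε := by rw [hδdef]; linarith
    linarith
  · -- easy direction
    refine ciSup_le ?_
    rintro ⟨x, hxA, hx1⟩
    obtain ⟨t₀⟩ := ‹Nonempty Ω›
    obtain ⟨u, hu1, -, hucs, hu01⟩ :=
      exists_continuous_one_zero_of_isCompact (isCompact_singleton (x := t₀))
        isClosed_empty (by simp)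
    have hzero : Tendsto (fun t => u t • x) (cocompact Ω) (𝓝 0) := by
      simpa using (hucs.is_zero_at_infty).smul_const x
    set e : C₀(Ω, C) := ⟨⟨fun t => u t • x, u.continuous.smul continuous_const⟩, hzero⟩
      with hedef
    have heA : e ∈ FA := by
      constructor
      · intro t
        show u t • x ∈ A
        rw [← Complex.coe_smul]
        exact SMulMemClass.smul_mem _ hxA
      · rw [mem_closedBall_zero_iff, ← norm_toBCF_eq_norm]
        refine (BoundedContinuousFunction.norm_le zero_le_one).2 fun t => ?_
        show ‖u t • x‖ ≤ 1
        rw [norm_smul, Real.norm_of_nonneg (hu01 t).1]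
        calc u t * ‖x‖ ≤ 1 * 1 := by
              refine mul_le_mul (hu01 t).2 (mem_closedBall_zero_iff.1 hx1)
                (norm_nonneg _) zero_le_one
          _ = 1 := one_mul _
    have het₀ : e t₀ = x := by
      show u t₀ • x = x
      have h1 : u t₀ = 1 := by simpa using hu1 rfl
      rw [h1, one_smul]
    have key : ∀ g ∈ FB, infDist x KB ≤ dist e g := by
      intro g hg
      have hgt₀ : g t₀ ∈ KB := by
        refine ⟨hg.1 t₀, mem_closedBall_zero_iff.2 ?_⟩
        refine le_trans (g.toBCF.norm_coe_le_norm t₀) ?_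
        rw [norm_toBCF_eq_norm]
        exact mem_closedBall_zero_iff.1 hg.2
      calc infDist x KB ≤ dist (e t₀) (g t₀) := by
            rw [het₀]; exact infDist_le_dist_of_mem hgt₀
        _ ≤ dist e g := by
            rw [← dist_toBCF_eq_dist]
            exact BoundedContinuousFunction.dist_coe_le_dist (f := e.toBCF) (g := g.toBCF) t₀
    have hle : infDist x KB ≤ infDist (e : C₀(Ω, C)) FB := by
      by_contra hcon
      push_neg at hcon
      obtain ⟨g, hg, hlt⟩ := (infDist_lt_iff ⟨0, h0FB⟩).1 hcon
      exact absurd (key g hg) (not_le.2 hlt)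
    exact le_trans hle (le_ciSup hbddF ⟨e, heA⟩)

/-- For finite-dimensional `*`-subalgebras `𝒜, ℬ` of a C*-algebra `𝒞` and a nonempty locally
compact Hausdorff space `Ω`, `d_KK(𝒜, ℬ) = d_KK(C₀(Ω, 𝒜), C₀(Ω, ℬ))`. -/
theorem dKK_eq_dKK_c0_of_finiteDimensional
    {C : Type*} [NonUnitalNormedRing C] [StarRing C] [CStarRing C] [NormedSpace ℂ C]
    [IsScalarTower ℂ C C] [SMulCommClass ℂ C C] [StarModule ℂ C] [CompleteSpace C]
    (Ω : Type*) [TopologicalSpace Ω] [LocallyCompactSpace Ω] [T2Space Ω] [Nonempty Ω]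
    (A B : NonUnitalStarSubalgebra ℂ C)
    [FiniteDimensional ℂ A] [FiniteDimensional ℂ B] :
    dKK (A : Set C) (B : Set C) =
      dKK (c0ValIn (Ω := Ω) (A : Set C)) (c0ValIn (Ω := Ω) (B : Set C)) := by
  rw [dKK, dKK, c0_sup_eq_aux Ω A B, c0_sup_eq_aux Ω B A]
end
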